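/- arXiv:2410.20125 — 2 statements merged into one kernel-verified Lean document; each statement's English description precedes it below -/
import Mathlib

section
/- Let A be a unital Banach algebra and let (a_t)_{t∈ℕ} be a bounded sequence in A and x ∈ A. If the commutator [a_t, x] tends to 0 as t → ∞, then exp(x + a_t) − exp(x)·exp(a_t) tends to 0 as t → ∞. -/
open Filter Topology NormedSpace
open scoped Nat

section Aux

variable {A : Type*} [NormedRing A] [NormedAlgebra ℝ A] [CompleteSpace A]

lemma comm_pow_bound (x b : A) (n : ℕ) :
    ‖b * x ^ n - x ^ n * b‖ ≤ n * (‖x‖ + 1) ^ n * ‖b * x - x * b‖ := by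
  induction n with
  | zero => simp
  | succ n ih =>
    have hR : (0:ℝ) ≤ ‖x‖ + 1 := by positivity
    have hc : (0:ℝ) ≤ ‖b * x - x * b‖ := norm_nonneg _
    have hkey : ∀ y : A, b * (x * y) - (x * y) * b
        = (b * x - x * b) * y + x * (b * y - y * b) := by
      intro y; noncomm_ring
    rcases Nat.eq_zero_or_pos n with hn | hn
    · subst hn
      simp only [pow_one, pow_zero, mul_one, one_mul, Nat.cast_one, Nat.zero_add]
      push_cast
      nlinarith [mul_nonneg (norm_nonneg x) hc]
    · have h1 : ‖x ^ n‖ ≤ ‖x‖ ^ n := norm_pow_le' x hn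
      have h2 : ‖x‖ ^ n ≤ (‖x‖ + 1) ^ n :=
        pow_le_pow_left₀ (norm_nonneg x) (by linarith) n
      have h3 : ‖x‖ ≤ ‖x‖ + 1 := by linarith
      have hP : (0:ℝ) ≤ (‖x‖ + 1) ^ n := pow_nonneg hR n
      have t1 : ‖b * x - x * b‖ * ‖x ^ n‖ ≤ ‖b * x - x * b‖ * (‖x‖ + 1) ^ n :=
        mul_le_mul_of_nonneg_left (h1.trans h2) hc
      have t2 : ‖b * x - x * b‖ * (‖x‖ + 1) ^ n
          ≤ ‖b * x - x * b‖ * ((‖x‖ + 1) ^ n * (‖x‖ + 1)) :=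
        mul_le_mul_of_nonneg_left (le_mul_of_one_le_right hP (by linarith [norm_nonneg x])) hc
      have t3 : ‖x‖ * ‖b * x ^ n - x ^ n * b‖
          ≤ ‖x‖ * (n * (‖x‖ + 1) ^ n * ‖b * x - x * b‖) :=
        mul_le_mul_of_nonneg_left ih (norm_nonneg x)
      have t4 : ‖x‖ * (n * (‖x‖ + 1) ^ n * ‖b * x - x * b‖)
          ≤ (‖x‖ + 1) * (n * (‖x‖ + 1) ^ n * ‖b * x - x * b‖) :=
        mul_le_mul_of_nonneg_right h3 (by positivity)
      calc ‖b * x ^ (n+1) - x ^ (n+1) * b‖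
          = ‖(b * x - x * b) * x ^ n + x * (b * x ^ n - x ^ n * b)‖ := by
            rw [pow_succ', hkey (x ^ n)]
        _ ≤ ‖(b * x - x * b) * x ^ n‖ + ‖x * (b * x ^ n - x ^ n * b)‖ := norm_add_le _ _
        _ ≤ ‖b * x - x * b‖ * ‖x ^ n‖ + ‖x‖ * ‖b * x ^ n - x ^ n * b‖ :=
            add_le_add (norm_mul_le _ _) (norm_mul_le _ _)
        _ ≤ (↑(n+1)) * (‖x‖ + 1) ^ (n+1) * ‖b * x - x * b‖ := by
            push_cast
            rw [pow_succ]
            nlinarith [t1, t2, t3, t4]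

lemma K_summable (R : ℝ) (hR : 0 ≤ R) :
    Summable (fun n : ℕ => (n ! : ℝ)⁻¹ * (n * R ^ n)) := by
  refine Summable.of_nonneg_of_le (fun n => by positivity) (fun n => ?_)
    (Real.summable_pow_div_factorial (2*R))
  have h1 : (n:ℝ) ≤ 2 ^ n := by exact_mod_cast (Nat.lt_two_pow_self (n := n)).le
  have h2 : (n:ℝ) * R ^ n ≤ (2*R) ^ n := by
    rw [mul_pow]
    exact mul_le_mul_of_nonneg_right h1 (pow_nonneg hR n)
  rw [div_eq_inv_mul]
  exact mul_le_mul_of_nonneg_left h2 (by positivity)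

lemma comm_exp_bound (x b : A) (s : ℝ) (hs : |s| ≤ 1) :
    ‖exp (s • x) * b - b * exp (s • x)‖
      ≤ (∑' n : ℕ, (n ! : ℝ)⁻¹ * (n * (‖x‖ + 1) ^ n)) * ‖b * x - x * b‖ := by
  have hR : (0:ℝ) ≤ ‖x‖ + 1 := by positivity
  have hsum : Summable (fun n : ℕ => ((n ! : ℝ)⁻¹) • (s • x) ^ n) :=
    expSeries_summable' (𝕂 := ℝ) (s • x)
  have h₁ : exp (s • x) * b = ∑' n : ℕ, (((n ! : ℝ)⁻¹) • (s • x) ^ n) * b := by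
    rw [exp_eq_tsum ℝ]
    exact (hsum.tsum_mul_right b).symm
  have h₂ : b * exp (s • x) = ∑' n : ℕ, b * (((n ! : ℝ)⁻¹) • (s • x) ^ n) := by
    rw [exp_eq_tsum ℝ]
    exact (hsum.tsum_mul_left b).symm
  have hsub : exp (s • x) * b - b * exp (s • x)
      = ∑' n : ℕ, ((n ! : ℝ)⁻¹) • ((s • x) ^ n * b - b * (s • x) ^ n) := by
    rw [h₁, h₂, ← Summable.tsum_sub (hsum.mul_right b) (hsum.mul_left b)]
    congr 1
    funext n
    rw [smul_mul_assoc, mul_smul_comm, smul_sub]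
  have hterm : ∀ n : ℕ, ‖((n ! : ℝ)⁻¹) • ((s • x) ^ n * b - b * (s • x) ^ n)‖
      ≤ ((n ! : ℝ)⁻¹ * (n * (‖x‖ + 1) ^ n)) * ‖b * x - x * b‖ := by
    intro n
    have hy : (s • x) ^ n * b - b * (s • x) ^ n = s ^ n • (x ^ n * b - b * x ^ n) := by
      rw [smul_pow, smul_mul_assoc, mul_smul_comm, smul_sub]
    rw [hy, norm_smul, norm_smul]
    have hnorm : ‖x ^ n * b - b * x ^ n‖ = ‖b * x ^ n - x ^ n * b‖ := by
      rw [← norm_neg]; congr 1; abel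
    have hsn : ‖s ^ n‖ ≤ 1 := by
      rw [Real.norm_eq_abs, abs_pow]; exact pow_le_one₀ (abs_nonneg s) hs
    have hcp : ‖x ^ n * b - b * x ^ n‖ ≤ n * (‖x‖ + 1) ^ n * ‖b * x - x * b‖ := by
      rw [hnorm]; exact comm_pow_bound x b n
    have hfact : ‖((n ! : ℝ)⁻¹ : ℝ)‖ = (n ! : ℝ)⁻¹ := by
      rw [Real.norm_eq_abs, abs_of_nonneg (by positivity)]
    rw [hfact]
    calc (n ! : ℝ)⁻¹ * (‖s ^ n‖ * ‖x ^ n * b - b * x ^ n‖)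
        ≤ (n ! : ℝ)⁻¹ * (1 * (n * (‖x‖ + 1) ^ n * ‖b * x - x * b‖)) := by
          refine mul_le_mul_of_nonneg_left ?_ (by positivity)
          exact mul_le_mul hsn hcp (norm_nonneg _) zero_le_one
      _ = ((n ! : ℝ)⁻¹ * (n * (‖x‖ + 1) ^ n)) * ‖b * x - x * b‖ := by ring
  have hgsum : Summable
      (fun n : ℕ => ((n ! : ℝ)⁻¹ * (n * (‖x‖ + 1) ^ n)) * ‖b * x - x * b‖) :=
    (K_summable (‖x‖ + 1) hR).mul_right _
  have hns : Summable
      (fun n : ℕ => ‖((n ! : ℝ)⁻¹) • ((s • x) ^ n * b - b * (s • x) ^ n)‖) :=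
    Summable.of_nonneg_of_le (fun n => norm_nonneg _) hterm hgsum
  calc ‖exp (s • x) * b - b * exp (s • x)‖
      = ‖∑' n : ℕ, ((n ! : ℝ)⁻¹) • ((s • x) ^ n * b - b * (s • x) ^ n)‖ := by rw [hsub]
    _ ≤ ∑' n : ℕ, ‖((n ! : ℝ)⁻¹) • ((s • x) ^ n * b - b * (s • x) ^ n)‖ :=
        norm_tsum_le_tsum_norm hns
    _ ≤ ∑' n : ℕ, ((n ! : ℝ)⁻¹ * (n * (‖x‖ + 1) ^ n)) * ‖b * x - x * b‖ :=
        Summable.tsum_le_tsum hterm hns hgsum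
    _ = (∑' n : ℕ, (n ! : ℝ)⁻¹ * (n * (‖x‖ + 1) ^ n)) * ‖b * x - x * b‖ :=
        (K_summable (‖x‖ + 1) hR).tsum_mul_right _

lemma norm_exp_bound (y : A) (M : ℝ) (hy : ‖y‖ ≤ M) :
    ‖exp y‖ ≤ (‖(1:A)‖ + 1) * Real.exp M := by
  have hM : 0 ≤ M := le_trans (norm_nonneg y) hy
  rw [exp_eq_tsum ℝ]
  have hsum := norm_expSeries_summable' (𝕂 := ℝ) y
  refine le_trans (norm_tsum_le_tsum_norm hsum) ?_
  have hexpsum : Summable (fun n : ℕ => (n ! : ℝ)⁻¹ * M ^ n) :=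
    (Real.summable_pow_div_factorial M).congr (fun n => by rw [div_eq_inv_mul])
  have hterm : ∀ n : ℕ,
      ‖((n ! : ℝ)⁻¹ : ℝ) • y ^ n‖ ≤ (‖(1:A)‖ + 1) * ((n ! : ℝ)⁻¹ * M ^ n) := by
    intro n
    have hfact : ‖((n ! : ℝ)⁻¹ : ℝ)‖ = (n ! : ℝ)⁻¹ := by
      rw [Real.norm_eq_abs, abs_of_nonneg (by positivity)]
    rw [norm_smul, hfact]
    rcases Nat.eq_zero_or_pos n with hn | hn
    · subst hn
      simp only [pow_zero, Nat.factorial_zero, Nat.cast_one, inv_one, one_mul, mul_one]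
      linarith [norm_nonneg (1:A)]
    · have h1 : ‖y ^ n‖ ≤ ‖y‖ ^ n := norm_pow_le' y hn
      have h2 : ‖y‖ ^ n ≤ M ^ n := pow_le_pow_left₀ (norm_nonneg y) hy n
      have h4 : (0:ℝ) ≤ (n ! : ℝ)⁻¹ := by positivity
      have t1 : (n ! : ℝ)⁻¹ * ‖y ^ n‖ ≤ (n ! : ℝ)⁻¹ * M ^ n :=
        mul_le_mul_of_nonneg_left (h1.trans h2) h4
      have t2 : (n ! : ℝ)⁻¹ * M ^ n ≤ (‖(1:A)‖ + 1) * ((n ! : ℝ)⁻¹ * M ^ n) :=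
        le_mul_of_one_le_left (by positivity) (by linarith [norm_nonneg (1:A)])
      linarith
  calc ∑' n : ℕ, ‖((n ! : ℝ)⁻¹ : ℝ) • y ^ n‖
      ≤ ∑' n : ℕ, (‖(1:A)‖ + 1) * ((n ! : ℝ)⁻¹ * M ^ n) :=
        Summable.tsum_le_tsum hterm hsum (hexpsum.mul_left _)
    _ = (‖(1:A)‖ + 1) * ∑' n : ℕ, (n ! : ℝ)⁻¹ * M ^ n := hexpsum.tsum_mul_left _
    _ = (‖(1:A)‖ + 1) * Real.exp M := by
        congr 1
        rw [Real.exp_eq_exp_ℝ, exp_eq_tsum ℝ]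
        simp [smul_eq_mul]

lemma hasDeriv_f (x b : A) (s : ℝ) :
    HasDerivAt (fun s : ℝ => exp ((1 - s) • (x + b)) * (exp (s • x) * exp (s • b)))
      (exp ((1 - s) • (x + b)) *
        ((exp (s • x) * b - b * exp (s • x)) * exp (s • b))) s := by
  have h2 := hasDerivAt_exp_smul_const (𝕂 := ℝ) x s
  have h3 := hasDerivAt_exp_smul_const' (𝕂 := ℝ) b s
  have hinner : HasDerivAt (fun s : ℝ => 1 - s) (-1) s := by
    simpa using (hasDerivAt_id s).const_sub (1:ℝ)
  have h1 : HasDerivAt (fun s : ℝ => exp ((1 - s) • (x + b)))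
      ((-1 : ℝ) • (exp ((1 - s) • (x + b)) * (x + b))) s :=
    HasDerivAt.scomp s (hasDerivAt_exp_smul_const (𝕂 := ℝ) (x + b) (1 - s)) hinner
  have h := h1.mul (h2.mul h3)
  convert h using 1
  · rfl
  have hc : exp (s • x) * x = x * exp (s • x) :=
    (((Commute.refl x).smul_right s).exp_right).symm.eq
  rw [hc]
  simp only [neg_one_smul, neg_mul, Pi.mul_apply]
  noncomm_ring

lemma key_bound (x b : A) (D : ℝ) (hb : ‖b‖ ≤ D) :
    ‖exp (x + b) - exp x * exp b‖ ≤
      (((‖(1:A)‖ + 1) * Real.exp (‖x‖ + D)) *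
        (∑' n : ℕ, (n ! : ℝ)⁻¹ * (n * (‖x‖ + 1) ^ n)) *
        ((‖(1:A)‖ + 1) * Real.exp D)) * ‖b * x - x * b‖ := by
  have hD : 0 ≤ D := le_trans (norm_nonneg b) hb
  set f : ℝ → A := fun s => exp ((1 - s) • (x + b)) * (exp (s • x) * exp (s • b)) with hf
  set g : ℝ → A := fun s =>
    exp ((1 - s) • (x + b)) *
      ((exp (s • x) * b - b * exp (s • x)) * exp (s • b)) with hg
  have hgcont : Continuous g := by
    have hc1 : Continuous fun s : ℝ => exp ((1 - s) • (x + b)) :=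
      (continuous_iff_continuousAt.2 fun u =>
        (hasDerivAt_exp_smul_const (𝕂 := ℝ) (x + b) u).continuousAt).comp
        (continuous_const.sub continuous_id)
    have hc2 : Continuous fun s : ℝ => exp (s • x) :=
      continuous_iff_continuousAt.2 fun u =>
        (hasDerivAt_exp_smul_const (𝕂 := ℝ) x u).continuousAt
    have hc3 : Continuous fun s : ℝ => exp (s • b) :=
      continuous_iff_continuousAt.2 fun u =>
        (hasDerivAt_exp_smul_const (𝕂 := ℝ) b u).continuousAt
    exact hc1.mul (((hc2.mul continuous_const).sub (continuous_const.mul hc2)).mul hc3)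
  have hFTC : ∫ s in (0:ℝ)..1, g s = f 1 - f 0 :=
    intervalIntegral.integral_eq_sub_of_hasDerivAt (fun s _ => hasDeriv_f x b s)
      (hgcont.intervalIntegrable 0 1)
  have hf1 : f 1 = exp x * exp b := by
    simp [hf, sub_self, zero_smul, exp_zero, one_smul]
  have hf0 : f 0 = exp (x + b) := by
    simp [hf, zero_smul, exp_zero, one_smul]
  set K : ℝ := ∑' n : ℕ, (n ! : ℝ)⁻¹ * (n * (‖x‖ + 1) ^ n) with hK
  have hK0 : 0 ≤ K := tsum_nonneg (fun n => by positivity)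
  set B : ℝ := ((‖(1:A)‖ + 1) * Real.exp (‖x‖ + D)) * ((K * ‖b * x - x * b‖) *
    ((‖(1:A)‖ + 1) * Real.exp D)) with hB
  have hbound : ∀ s ∈ Set.uIoc (0:ℝ) 1, ‖g s‖ ≤ B := by
    intro s hs
    rw [Set.uIoc_of_le zero_le_one] at hs
    obtain ⟨hs0, hs1⟩ := hs
    have habs : |s| ≤ 1 := by rw [abs_of_nonneg hs0.le]; exact hs1
    have hu : ‖exp ((1 - s) • (x + b))‖ ≤ (‖(1:A)‖ + 1) * Real.exp (‖x‖ + D) := by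
      apply norm_exp_bound
      rw [norm_smul]
      have h5 : |1 - s| ≤ 1 := by rw [abs_of_nonneg (by linarith)]; linarith
      calc ‖(1 - s)‖ * ‖x + b‖ ≤ 1 * (‖x‖ + D) := by
            refine mul_le_mul (by rwa [Real.norm_eq_abs])
              (le_trans (norm_add_le x b) (by linarith)) (norm_nonneg _) zero_le_one
        _ = ‖x‖ + D := one_mul _
    have hm : ‖exp (s • x) * b - b * exp (s • x)‖ ≤ K * ‖b * x - x * b‖ :=
      comm_exp_bound x b s habs
    have hw : ‖exp (s • b)‖ ≤ (‖(1:A)‖ + 1) * Real.exp D := by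
      apply norm_exp_bound
      rw [norm_smul, Real.norm_eq_abs]
      calc |s| * ‖b‖ ≤ 1 * D := mul_le_mul habs hb (norm_nonneg b) zero_le_one
        _ = D := one_mul D
    have h1 : ‖g s‖ ≤ ‖exp ((1 - s) • (x + b))‖ *
        (‖exp (s • x) * b - b * exp (s • x)‖ * ‖exp (s • b)‖) :=
      le_trans (norm_mul_le _ _)
        (mul_le_mul_of_nonneg_left (norm_mul_le _ _) (norm_nonneg _))
    refine le_trans h1 ?_
    rw [hB]
    exact mul_le_mul hu (mul_le_mul hm hw (norm_nonneg _) (by positivity))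
      (by positivity) (by positivity)
  have hnorm : ‖∫ s in (0:ℝ)..1, g s‖ ≤ B * |1 - 0| :=
    intervalIntegral.norm_integral_le_of_norm_le_const hbound
  have heq : exp (x + b) - exp x * exp b = -(∫ s in (0:ℝ)..1, g s) := by
    rw [hFTC, hf1, hf0]; abel
  rw [heq, norm_neg]
  calc ‖∫ s in (0:ℝ)..1, g s‖ ≤ B * |1 - 0| := hnorm
    _ = B := by norm_num
    _ = (((‖(1:A)‖ + 1) * Real.exp (‖x‖ + D)) * K *
        ((‖(1:A)‖ + 1) * Real.exp D)) * ‖b * x - x * b‖ := by rw [hB]; ring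

end Aux

/-- In a unital Banach algebra, if `(a t)` is a bounded sequence and the
commutators `[a t, x]` tend to `0`, then `exp (x + a t) - exp x * exp (a t)` tends to `0`. -/
theorem stmt2 {A : Type*} [NormedRing A] [NormedAlgebra ℝ A] [CompleteSpace A]
    (a : ℕ → A) (x : A) (C : ℝ) (hbdd : ∀ t, ‖a t‖ ≤ C)
    (hcomm : Tendsto (fun t => a t * x - x * a t) atTop (𝓝 0)) :
    Tendsto (fun t => NormedSpace.exp (x + a t) -
      NormedSpace.exp x * NormedSpace.exp (a t)) atTop (𝓝 0) := by
  set K0 : ℝ := ((‖(1:A)‖ + 1) * Real.exp (‖x‖ + C)) *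
      (∑' n : ℕ, (n ! : ℝ)⁻¹ * (n * (‖x‖ + 1) ^ n)) *
      ((‖(1:A)‖ + 1) * Real.exp C) with hK0
  rw [tendsto_zero_iff_norm_tendsto_zero]
  have hle : ∀ t, ‖NormedSpace.exp (x + a t) - NormedSpace.exp x * NormedSpace.exp (a t)‖
      ≤ K0 * ‖a t * x - x * a t‖ := fun t => key_bound x (a t) C (hbdd t)
  have hg : Tendsto (fun t => K0 * ‖a t * x - x * a t‖) atTop (𝓝 0) := by
    have h := hcomm.norm
    rw [norm_zero] at h
    simpa using h.const_mul K0
  exact squeeze_zero (fun t => norm_nonneg _) hle hg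
end

section
/- Let A be a unital C*-algebra, B ⊆ A a closed ideal, φ : D → A a *-homomorphism, and x ∈ A with x* = −x and [x, φ(D)] ⊆ B. Let U = exp(x), and let (h_t) be an approximate unit for B that is quasicentral for φ(D) and for x, with each h_t a positive contraction in B. Set V_t = exp(h_t x h_t). Then V_t is a unitary in 1 + B, V_t* U − exp(x − h_t x h_t) → 0 in norm, and [V_t* U, φ(d)] → 0 in norm for each d ∈ D. -/
open Filter Topology NormedSpace

set_option linter.unusedSectionVars false
set_option maxHeartbeats 1000000

section auxlemmas
open scoped Nat
variable {A : Type*} [NormedRing A] [NormedAlgebra ℂ A] [CompleteSpace A] [NormOneClass A]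

lemma pow_comm_bound (a c : A) (k : ℕ) :
    ‖a ^ k * c - c * a ^ k‖ ≤ k * ‖a‖ ^ (k - 1) * ‖a * c - c * a‖ := by
  induction k with
  | zero => simp
  | succ k ih =>
    have key : a ^ (k+1) * c - c * a ^ (k+1)
        = a * (a ^ k * c - c * a ^ k) + (a * c - c * a) * a ^ k := by
      rw [pow_succ']; noncomm_ring
    rw [key]
    have h1 : ‖a * (a ^ k * c - c * a ^ k)‖ ≤ ‖a‖ * (k * ‖a‖ ^ (k - 1) * ‖a * c - c * a‖) :=
      (norm_mul_le _ _).trans (by gcongr)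
    have h2 : ‖(a * c - c * a) * a ^ k‖ ≤ ‖a * c - c * a‖ * ‖a‖ ^ k :=
      (norm_mul_le _ _).trans (by gcongr; exact norm_pow_le _ _)
    have h3 : ‖a‖ * ((k : ℝ) * ‖a‖ ^ (k - 1) * ‖a * c - c * a‖)
        ≤ (k : ℝ) * ‖a‖ ^ k * ‖a * c - c * a‖ := by
      rcases k with _ | m
      · simp
      · have : ‖a‖ * ((↑(m+1) : ℝ) * ‖a‖ ^ (m + 1 - 1) * ‖a * c - c * a‖)
            = (↑(m+1) : ℝ) * ‖a‖ ^ (m+1) * ‖a * c - c * a‖ := by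
          simp only [Nat.add_sub_cancel]
          ring
        rw [this]
    calc ‖a * (a ^ k * c - c * a ^ k) + (a * c - c * a) * a ^ k‖
        ≤ ‖a * (a ^ k * c - c * a ^ k)‖ + ‖(a * c - c * a) * a ^ k‖ := norm_add_le _ _
      _ ≤ (k : ℝ) * ‖a‖ ^ k * ‖a * c - c * a‖ + ‖a * c - c * a‖ * ‖a‖ ^ k :=
          add_le_add (h1.trans h3) h2
      _ = (↑(k+1) : ℝ) * ‖a‖ ^ (k + 1 - 1) * ‖a * c - c * a‖ := by
          simp only [Nat.add_sub_cancel]; push_cast; ring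

lemma nat_le_two_pow (n : ℕ) : (n : ℝ) ≤ 2 ^ n := by
  exact_mod_cast (Nat.lt_two_pow_self (n := n)).le

lemma exp_comm_bound (M : ℝ) (hM : 1 ≤ M) (y c : A) (hy : ‖y‖ ≤ M) :
    ‖exp y * c - c * exp y‖ ≤ (∑' n : ℕ, (2*M)^n / n !) * ‖y * c - c * y‖ := by
  have hM0 : 0 ≤ M := le_trans zero_le_one hM
  set ε := ‖y * c - c * y‖ with hε
  have hε0 : 0 ≤ ε := norm_nonneg _
  have hsum : Summable (fun n : ℕ => ((n !:ℂ))⁻¹ • y ^ n) := expSeries_summable' (𝕂 := ℂ) y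
  -- pointwise bound
  have hbd : ∀ n : ℕ, ‖((n !:ℂ))⁻¹ • y ^ n * c - c * ((n !:ℂ))⁻¹ • y ^ n‖
      ≤ (2*M)^n / n ! * ε := by
    intro n
    have h1 : ((n !:ℂ))⁻¹ • y ^ n * c - c * ((n !:ℂ))⁻¹ • y ^ n
        = ((n !:ℂ))⁻¹ • (y ^ n * c - c * y ^ n) := by
      rw [smul_mul_assoc, mul_smul_comm, smul_sub]
    rw [h1, norm_smul]
    have h2 : ‖((n !:ℂ))⁻¹‖ = ((n !:ℝ))⁻¹ := by
      rw [norm_inv]; norm_cast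
    rw [h2]
    have h3 : ‖y ^ n * c - c * y ^ n‖ ≤ n * ‖y‖ ^ (n - 1) * ε := pow_comm_bound y c n
    have h4 : (n : ℝ) * ‖y‖ ^ (n - 1) ≤ (2*M)^n := by
      have hyM : ‖y‖ ^ (n-1) ≤ M ^ (n-1) := pow_le_pow_left₀ (norm_nonneg y) hy _
      have hMn : M ^ (n-1) ≤ M ^ n := pow_le_pow_right₀ hM (Nat.sub_le n 1)
      calc (n : ℝ) * ‖y‖ ^ (n - 1) ≤ 2 ^ n * M ^ n := by
            apply mul_le_mul (nat_le_two_pow n) (hyM.trans hMn)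
              (pow_nonneg (norm_nonneg y) _) (by positivity)
        _ = (2*M)^n := (mul_pow 2 M n).symm
    calc ((n ! : ℝ))⁻¹ * ‖y ^ n * c - c * y ^ n‖
        ≤ ((n ! : ℝ))⁻¹ * ((2*M)^n * ε) := by
          refine mul_le_mul_of_nonneg_left ?_ (by positivity)
          exact h3.trans (mul_le_mul_of_nonneg_right h4 hε0)
      _ = (2*M)^n / n ! * ε := by rw [div_eq_mul_inv]; ring
  -- summability of bound
  have hsumbd : Summable (fun n : ℕ => (2*M)^n / (n ! : ℝ) * ε) :=
    (Real.summable_pow_div_factorial (2*M)).mul_right ε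
  -- rewrite difference as tsum
  have key : exp y * c - c * exp y
      = ∑' n : ℕ, (((n !:ℂ))⁻¹ • y ^ n * c - c * ((n !:ℂ))⁻¹ • y ^ n) := by
    rw [exp_eq_tsum ℂ]
    rw [← hsum.tsum_mul_right c, ← hsum.tsum_mul_left c]
    exact (Summable.tsum_sub (hsum.mul_right c) (hsum.mul_left c)).symm
  rw [key]
  calc ‖∑' n : ℕ, (((n !:ℂ))⁻¹ • y ^ n * c - c * ((n !:ℂ))⁻¹ • y ^ n)‖
      ≤ ∑' n : ℕ, ‖((n !:ℂ))⁻¹ • y ^ n * c - c * ((n !:ℂ))⁻¹ • y ^ n‖ := by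
        apply norm_tsum_le_tsum_norm
        exact Summable.of_nonneg_of_le (fun n => norm_nonneg _) hbd hsumbd
    _ ≤ ∑' n : ℕ, (2*M)^n / n ! * ε := by
        apply Summable.tsum_le_tsum hbd _ hsumbd
        exact Summable.of_nonneg_of_le (fun n => norm_nonneg _) hbd hsumbd
    _ = (∑' n : ℕ, (2*M)^n / n !) * ε := by
        rw [tsum_mul_right]

-- Pascal-type identity for binomial sums of noncommuting elements
lemma pascal_sum (a b : A) (n : ℕ) :
    (∑ k ∈ Finset.range (n+2), ((n+1).choose k : ℂ) • (a^k * b^(n+1-k)))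
      = (∑ k ∈ Finset.range (n+1), (n.choose k : ℂ) • (a^(k+1) * b^(n-k)))
        + ∑ k ∈ Finset.range (n+1), (n.choose k : ℂ) • (a^k * b^(n+1-k)) := by
  rw [Finset.sum_range_succ' (fun k => ((n+1).choose k : ℂ) • (a^k * b^(n+1-k))) (n+1)]
  have h1 : ∀ k, ((n+1).choose (k+1) : ℂ) • (a^(k+1) * b^(n+1-(k+1)))
      = (n.choose k : ℂ) • (a^(k+1) * b^(n-k)) + (n.choose (k+1) : ℂ) • (a^(k+1) * b^(n-k)) := by
    intro k
    rw [Nat.choose_succ_succ, Nat.cast_add, add_smul, Nat.succ_sub_succ]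
  simp only [h1, Finset.sum_add_distrib]
  have h2 : ∑ k ∈ Finset.range (n+1), (n.choose (k+1) : ℂ) • (a^(k+1) * b^(n-k))
      = ∑ k ∈ Finset.range n, (n.choose (k+1) : ℂ) • (a^(k+1) * b^(n-k)) := by
    rw [Finset.sum_range_succ]
    simp [Nat.choose_succ_self]
  have h3 : ∑ k ∈ Finset.range (n+1), (n.choose k : ℂ) • (a^k * b^(n+1-k))
      = (∑ k ∈ Finset.range n, (n.choose (k+1) : ℂ) • (a^(k+1) * b^(n-k)))
        + (1 : ℂ) • ((1:A) * b^(n+1)) := by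
    rw [Finset.sum_range_succ' (fun k => (n.choose k : ℂ) • (a^k * b^(n+1-k))) n]
    simp [Nat.succ_sub_succ]
  rw [h2, h3]
  simp only [Nat.choose_zero_right, Nat.cast_one, pow_zero, one_smul, one_mul, Nat.sub_zero]
  abel

lemma binom_approx (M : ℝ) (hM : 1 ≤ M) (a b : A) (ha : ‖a‖ ≤ M) (hb : ‖b‖ ≤ M) (n : ℕ) :
    ‖(a+b)^n - ∑ k ∈ Finset.range (n+1), (n.choose k : ℂ) • (a^k * b^(n-k))‖
      ≤ (n:ℝ)^2 * (4*M^2)^n * ‖a * b - b * a‖ := by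
  set ε := ‖a * b - b * a‖ with hε
  have hε0 : 0 ≤ ε := norm_nonneg _
  have hM0 : (0:ℝ) < M := lt_of_lt_of_le one_pos hM
  induction n with
  | zero => simp
  | succ n ih =>
    -- the key algebraic identity
    have hkey : (a+b)^(n+1) - ∑ k ∈ Finset.range (n+2), ((n+1).choose k : ℂ) • (a^k * b^(n+1-k))
        = (a+b) * ((a+b)^n - ∑ k ∈ Finset.range (n+1), (n.choose k : ℂ) • (a^k * b^(n-k)))
          - ∑ k ∈ Finset.range (n+1), (n.choose k : ℂ) • ((a^k * b - b * a^k) * b^(n-k)) := by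
      rw [pascal_sum]
      rw [mul_sub, ← pow_succ']
      rw [Finset.mul_sum]
      have : ∀ k ∈ Finset.range (n+1),
          (a+b) * ((n.choose k : ℂ) • (a^k * b^(n-k)))
            = ((n.choose k : ℂ) • (a^(k+1) * b^(n-k))
                + (n.choose k : ℂ) • (a^k * b^(n+1-k)))
              - (n.choose k : ℂ) • ((a^k * b - b * a^k) * b^(n-k)) := by
        intro k hk
        have hkn : k ≤ n := Nat.lt_succ_iff.mp (Finset.mem_range.mp hk)
        have hbk : b ^ (n+1-k) = b * b^(n-k) := by
          rw [Nat.succ_sub hkn, pow_succ']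
        rw [hbk, mul_smul_comm, ← smul_add, ← smul_sub, pow_succ']
        congr 1
        noncomm_ring
      rw [Finset.sum_congr rfl this, Finset.sum_sub_distrib, Finset.sum_add_distrib]
      abel
    rw [hkey]
    -- norm bound on the commutator sum
    have hsum_bd : ‖∑ k ∈ Finset.range (n+1), (n.choose k : ℂ) • ((a^k * b - b * a^k) * b^(n-k))‖
        ≤ 2^n * ((n:ℝ) * (M^n * M^n) * ε) := by
      calc ‖∑ k ∈ Finset.range (n+1), (n.choose k : ℂ) • ((a^k * b - b * a^k) * b^(n-k))‖
          ≤ ∑ k ∈ Finset.range (n+1), ‖(n.choose k : ℂ) • ((a^k * b - b * a^k) * b^(n-k))‖ :=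
            norm_sum_le _ _
        _ ≤ ∑ k ∈ Finset.range (n+1), (n.choose k : ℝ) * ((n:ℝ) * (M^n * M^n) * ε) := by
            apply Finset.sum_le_sum
            intro k hk
            have hkn : k ≤ n := Nat.lt_succ_iff.mp (Finset.mem_range.mp hk)
            rw [norm_smul]
            have hnc : ‖((n.choose k : ℕ) : ℂ)‖ = (n.choose k : ℝ) := by
              norm_cast
            rw [hnc]
            apply mul_le_mul_of_nonneg_left _ (by positivity)
            calc ‖(a^k * b - b * a^k) * b^(n-k)‖
                ≤ ‖a^k * b - b * a^k‖ * ‖b^(n-k)‖ := norm_mul_le _ _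
              _ ≤ ((k:ℝ) * ‖a‖^(k-1) * ε) * M^(n-k) := by
                  apply mul_le_mul (pow_comm_bound a b k) _ (norm_nonneg _) (by positivity)
                  exact (norm_pow_le _ _).trans (pow_le_pow_left₀ (norm_nonneg b) hb _)
              _ ≤ ((n:ℝ) * M^n * ε) * M^n := by
                  have h1 : ‖a‖^(k-1) ≤ M^n :=
                    (pow_le_pow_left₀ (norm_nonneg a) ha _).trans
                      (pow_le_pow_right₀ hM (le_trans (Nat.sub_le k 1) hkn))
                  have h2 : M^(n-k) ≤ M^n := pow_le_pow_right₀ hM (Nat.sub_le n k)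
                  have hkn' : (k:ℝ) ≤ (n:ℝ) := by exact_mod_cast hkn
                  apply mul_le_mul _ h2 (by positivity) (by positivity)
                  apply mul_le_mul _ le_rfl hε0 (by positivity)
                  exact mul_le_mul hkn' h1 (by positivity) (by positivity)
              _ = (n:ℝ) * (M^n * M^n) * ε := by ring
        _ = (∑ k ∈ Finset.range (n+1), (n.choose k : ℝ)) * ((n:ℝ) * (M^n * M^n) * ε) := by
            rw [Finset.sum_mul]
        _ = 2^n * ((n:ℝ) * (M^n * M^n) * ε) := by
            have : ∑ k ∈ Finset.range (n+1), (n.choose k : ℝ) = 2^n := by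
              rw [← Nat.cast_sum]
              rw [Nat.sum_range_choose]
              push_cast; ring
            rw [this]
    -- combine
    have htri : ‖(a+b) * ((a+b)^n - ∑ k ∈ Finset.range (n+1), (n.choose k : ℂ) • (a^k * b^(n-k)))
          - ∑ k ∈ Finset.range (n+1), (n.choose k : ℂ) • ((a^k * b - b * a^k) * b^(n-k))‖
        ≤ (2*M) * ((n:ℝ)^2 * (4*M^2)^n * ε) + 2^n * ((n:ℝ) * (M^n * M^n) * ε) := by
      refine (norm_sub_le _ _).trans (add_le_add ?_ hsum_bd)
      refine (norm_mul_le _ _).trans ?_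
      apply mul_le_mul _ ih (norm_nonneg _) (by positivity)
      calc ‖a + b‖ ≤ ‖a‖ + ‖b‖ := norm_add_le _ _
        _ ≤ 2*M := by linarith
    refine htri.trans ?_
    have hP : (2:ℝ)^n * (M^n * M^n) ≤ (4*M^2)^n := by
      calc (2:ℝ)^n * (M^n * M^n) = (2*M^2)^n := by rw [mul_pow, pow_two, mul_pow]
        _ ≤ (4*M^2)^n := by
            apply pow_le_pow_left₀ (by positivity)
            nlinarith
    have hP1 : (4*M^2)^n ≤ (4*M^2)^(n+1) := by
      apply pow_le_pow_right₀ (by nlinarith) (Nat.le_succ n)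
    have h2M : (2:ℝ)*M ≤ 4*M^2 := by nlinarith
    have e1 : (2*M) * ((n:ℝ)^2 * (4*M^2)^n * ε) ≤ (n:ℝ)^2 * (4*M^2)^(n+1) * ε := by
      calc (2*M) * ((n:ℝ)^2 * (4*M^2)^n * ε) = (n:ℝ)^2 * ((2*M) * (4*M^2)^n) * ε := by ring
        _ ≤ (n:ℝ)^2 * ((4*M^2) * (4*M^2)^n) * ε := by
            apply mul_le_mul_of_nonneg_right _ hε0
            apply mul_le_mul_of_nonneg_left _ (by positivity)
            apply mul_le_mul_of_nonneg_right h2M (by positivity)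
        _ = (n:ℝ)^2 * (4*M^2)^(n+1) * ε := by rw [← pow_succ']
    have e2 : (2:ℝ)^n * ((n:ℝ) * (M^n * M^n) * ε) ≤ (n:ℝ) * (4*M^2)^(n+1) * ε := by
      calc (2:ℝ)^n * ((n:ℝ) * (M^n * M^n) * ε) = (n:ℝ) * ((2:ℝ)^n * (M^n * M^n)) * ε := by ring
        _ ≤ (n:ℝ) * (4*M^2)^(n+1) * ε := by
            apply mul_le_mul_of_nonneg_right _ hε0
            apply mul_le_mul_of_nonneg_left (hP.trans hP1) (by positivity)
    calc (2*M) * ((n:ℝ)^2 * (4*M^2)^n * ε) + 2^n * ((n:ℝ) * (M^n * M^n) * ε)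
        ≤ (n:ℝ)^2 * (4*M^2)^(n+1) * ε + (n:ℝ) * (4*M^2)^(n+1) * ε := add_le_add e1 e2
      _ = ((n:ℝ)^2 + n) * ((4*M^2)^(n+1) * ε) := by ring
      _ ≤ ((n:ℝ)+1)^2 * ((4*M^2)^(n+1) * ε) := by
          apply mul_le_mul_of_nonneg_right _ (by positivity)
          nlinarith [(Nat.cast_nonneg n : (0:ℝ) ≤ n)]
      _ = (↑(n+1):ℝ)^2 * (4*M^2)^(n+1) * ε := by push_cast; ring

lemma summable_bd (M : ℝ) (hM : 1 ≤ M) :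
    Summable (fun n : ℕ => (n:ℝ)^2 * (4*M^2)^n / n !) := by
  refine Summable.of_nonneg_of_le (fun n => by positivity) (fun n => ?_)
    (Real.summable_pow_div_factorial (16*M^2))
  have h1 : (n:ℝ)^2 ≤ 4^n := by
    calc (n:ℝ)^2 ≤ ((2:ℝ)^n)^2 := by
          apply pow_le_pow_left₀ (Nat.cast_nonneg n) (nat_le_two_pow n)
      _ = 4^n := by rw [← pow_mul, mul_comm, pow_mul]; norm_num
  have h2 : (n:ℝ)^2 * (4*M^2)^n ≤ (16*M^2)^n := by
    calc (n:ℝ)^2 * (4*M^2)^n ≤ 4^n * (4*M^2)^n := by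
          apply mul_le_mul_of_nonneg_right h1 (by positivity)
      _ = (16*M^2)^n := by rw [← mul_pow]; congr 1; ring
  gcongr

lemma exp_mul_exp_bound (M : ℝ) (hM : 1 ≤ M) (a b : A) (ha : ‖a‖ ≤ M) (hb : ‖b‖ ≤ M) :
    ‖exp a * exp b - exp (a + b)‖
      ≤ (∑' n : ℕ, (n:ℝ)^2 * (4*M^2)^n / n !) * ‖a * b - b * a‖ := by
  set ε := ‖a * b - b * a‖ with hεdef
  have hε0 : 0 ≤ ε := norm_nonneg _
  have hcp : exp a * exp b = ∑' n : ℕ, ∑ kl ∈ Finset.HasAntidiagonal.antidiagonal n,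
      ((((kl.1)!:ℕ):ℂ))⁻¹ • a ^ kl.1 * ((((kl.2)!:ℕ):ℂ))⁻¹ • b ^ kl.2 := by
    rw [exp_eq_tsum ℂ]
    dsimp only
    exact tsum_mul_tsum_eq_tsum_sum_antidiagonal_of_summable_norm
      (norm_expSeries_summable' (𝕂 := ℂ) a) (norm_expSeries_summable' (𝕂 := ℂ) b)
  have hT : ∀ n : ℕ, (∑ kl ∈ Finset.HasAntidiagonal.antidiagonal n,
        ((((kl.1)!:ℕ):ℂ))⁻¹ • a ^ kl.1 * ((((kl.2)!:ℕ):ℂ))⁻¹ • b ^ kl.2)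
      = ((n !:ℂ))⁻¹ • ∑ k ∈ Finset.range (n+1), (n.choose k : ℂ) • (a^k * b^(n-k)) := by
    intro n
    rw [Finset.Nat.sum_antidiagonal_eq_sum_range_succ_mk, Finset.smul_sum]
    apply Finset.sum_congr rfl
    intro k hk
    have hkn : k ≤ n := Nat.lt_succ_iff.mp (Finset.mem_range.mp hk)
    rw [smul_mul_smul_comm, smul_smul]
    congr 1
    have hch : ((n.choose k : ℕ) : ℂ) = (n ! : ℂ) / ((k ! : ℂ) * ((n-k)! : ℂ)) := by
      exact_mod_cast Nat.cast_choose ℂ hkn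
    rw [hch]
    have h1 : ((k ! : ℕ) : ℂ) ≠ 0 := Nat.cast_ne_zero.mpr (Nat.factorial_ne_zero k)
    have h2 : (((n-k) ! : ℕ) : ℂ) ≠ 0 := Nat.cast_ne_zero.mpr (Nat.factorial_ne_zero (n-k))
    have h3 : ((n ! : ℕ) : ℂ) ≠ 0 := Nat.cast_ne_zero.mpr (Nat.factorial_ne_zero n)
    field_simp
  have hTsum : Summable (fun n : ℕ => ∑ kl ∈ Finset.HasAntidiagonal.antidiagonal n,
      ((((kl.1)!:ℕ):ℂ))⁻¹ • a ^ kl.1 * ((((kl.2)!:ℕ):ℂ))⁻¹ • b ^ kl.2) := by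
    have H := summable_norm_sum_mul_antidiagonal_of_summable_norm
      (f := fun k : ℕ => (((k)!:ℂ))⁻¹ • a ^ k) (g := fun k : ℕ => (((k)!:ℂ))⁻¹ • b ^ k)
      (norm_expSeries_summable' (𝕂 := ℂ) a) (norm_expSeries_summable' (𝕂 := ℂ) b)
    exact H.of_norm
  have hS2 : Summable (fun n : ℕ => ((n !:ℂ))⁻¹ • (a+b)^n) := expSeries_summable' (𝕂 := ℂ) (a+b)
  have hdiff : exp a * exp b - exp (a + b)
      = ∑' n : ℕ, ((∑ kl ∈ Finset.HasAntidiagonal.antidiagonal n,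
          ((((kl.1)!:ℕ):ℂ))⁻¹ • a ^ kl.1 * ((((kl.2)!:ℕ):ℂ))⁻¹ • b ^ kl.2)
        - ((n !:ℂ))⁻¹ • (a+b)^n) := by
    rw [hcp, exp_eq_tsum ℂ]
    exact (Summable.tsum_sub hTsum hS2).symm
  have hbd : ∀ n : ℕ, ‖(∑ kl ∈ Finset.HasAntidiagonal.antidiagonal n,
        ((((kl.1)!:ℕ):ℂ))⁻¹ • a ^ kl.1 * ((((kl.2)!:ℕ):ℂ))⁻¹ • b ^ kl.2)
      - ((n !:ℂ))⁻¹ • (a+b)^n‖ ≤ (n:ℝ)^2 * (4*M^2)^n / n ! * ε := by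
    intro n
    rw [hT n, ← smul_sub, norm_smul]
    have h2 : ‖((n !:ℂ))⁻¹‖ = ((n !:ℝ))⁻¹ := by rw [norm_inv]; norm_cast
    rw [h2, norm_sub_rev]
    calc ((n !:ℝ))⁻¹ * ‖(a+b)^n - ∑ k ∈ Finset.range (n+1), (n.choose k : ℂ) • (a^k * b^(n-k))‖
        ≤ ((n !:ℝ))⁻¹ * ((n:ℝ)^2 * (4*M^2)^n * ε) := by
          apply mul_le_mul_of_nonneg_left (binom_approx M hM a b ha hb n) (by positivity)
      _ = (n:ℝ)^2 * (4*M^2)^n / n ! * ε := by rw [div_eq_mul_inv]; ring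
  have hsumbd : Summable (fun n : ℕ => (n:ℝ)^2 * (4*M^2)^n / n ! * ε) :=
    (summable_bd M hM).mul_right ε
  rw [hdiff]
  calc ‖∑' n : ℕ, ((∑ kl ∈ Finset.HasAntidiagonal.antidiagonal n,
          ((((kl.1)!:ℕ):ℂ))⁻¹ • a ^ kl.1 * ((((kl.2)!:ℕ):ℂ))⁻¹ • b ^ kl.2)
        - ((n !:ℂ))⁻¹ • (a+b)^n)‖
      ≤ ∑' n : ℕ, ‖(∑ kl ∈ Finset.HasAntidiagonal.antidiagonal n,
          ((((kl.1)!:ℕ):ℂ))⁻¹ • a ^ kl.1 * ((((kl.2)!:ℕ):ℂ))⁻¹ • b ^ kl.2)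
        - ((n !:ℂ))⁻¹ • (a+b)^n‖ := by
        apply norm_tsum_le_tsum_norm
        exact Summable.of_nonneg_of_le (fun n => norm_nonneg _) hbd hsumbd
    _ ≤ ∑' n : ℕ, (n:ℝ)^2 * (4*M^2)^n / n ! * ε := by
        apply Summable.tsum_le_tsum hbd _ hsumbd
        exact Summable.of_nonneg_of_le (fun n => norm_nonneg _) hbd hsumbd
    _ = (∑' n : ℕ, (n:ℝ)^2 * (4*M^2)^n / n !) * ε := tsum_mul_right

lemma exp_sub_one_mem
    (B : TwoSidedIdeal A) (hB : IsClosed (B : Set A)) {a : A} (ha : a ∈ B) :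
    exp a - 1 ∈ B := by
  have hs := exp_series_hasSum_exp' (𝕂 := ℂ) a
  have htend : Tendsto (fun N => (∑ n ∈ Finset.range N, ((n !:ℂ))⁻¹ • a ^ n) - 1) atTop
      (𝓝 (exp a - 1)) := hs.tendsto_sum_nat.sub tendsto_const_nhds
  refine hB.mem_of_tendsto htend ?_
  filter_upwards [eventually_ge_atTop 1] with N hN
  obtain ⟨m, rfl⟩ : ∃ m, N = m + 1 := ⟨N - 1, by omega⟩
  rw [Finset.sum_range_succ' (fun n => ((n !:ℂ))⁻¹ • a ^ n) m]
  have h0 : (((0:ℕ) !:ℂ))⁻¹ • a ^ 0 = (1:A) := by simp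
  rw [h0, add_sub_cancel_right]
  have key : ∀ k, (∑ i ∈ Finset.range k, (((i+1) !:ℂ))⁻¹ • a ^ (i+1)) ∈ B := by
    intro k
    induction k with
    | zero => simpa using B.zero_mem
    | succ k ih =>
        rw [Finset.sum_range_succ]
        refine B.add_mem ih ?_
        rw [Algebra.smul_def]
        refine B.mul_mem_left _ _ ?_
        rw [pow_succ]
        exact B.mul_mem_left _ _ ha
  exact key m

end auxlemmas

/-- Lemma 9.2 of the paper: with `U = exp x` and `V_t = exp (h_t x h_t)`,
each `V_t` is a unitary in `1 + B`, `V_t* U - exp (x - h_t x h_t) → 0`, and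
`[V_t* U, φ d] → 0` for every `d`. -/
theorem stmt7 {A D : Type*} [CStarAlgebra A] [PartialOrder A] [StarOrderedRing A]
    [NonUnitalCStarAlgebra D]
    (B : TwoSidedIdeal A) (hBclosed : IsClosed (B : Set A))
    (φ : D →⋆ₙₐ[ℂ] A) (x : A) (hx : star x = -x)
    (hxB : ∀ d : D, x * φ d - φ d * x ∈ B)
    (h : ℕ → A) (hmem : ∀ t, h t ∈ B) (hpos : ∀ t, 0 ≤ h t) (hcontr : ∀ t, ‖h t‖ ≤ 1)
    (happrox : ∀ b ∈ B, Tendsto (fun t => h t * b) atTop (𝓝 b) ∧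
      Tendsto (fun t => b * h t) atTop (𝓝 b))
    (hqcφ : ∀ d : D, Tendsto (fun t => h t * φ d - φ d * h t) atTop (𝓝 0))
    (hqcx : Tendsto (fun t => h t * x - x * h t) atTop (𝓝 0)) :
    (∀ t, exp (h t * x * h t) ∈ unitary A ∧ exp (h t * x * h t) - 1 ∈ B) ∧
    Tendsto (fun t => star (exp (h t * x * h t)) * exp x - exp (x - h t * x * h t))
      atTop (𝓝 0) ∧
    ∀ d : D, Tendsto (fun t =>
        (star (exp (h t * x * h t)) * exp x) * φ d -
          φ d * (star (exp (h t * x * h t)) * exp x)) atTop (𝓝 0) := by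
  rcases subsingleton_or_nontrivial A with hsub | hnt
  · refine ⟨fun t => ⟨?_, ?_⟩, ?_, fun d => ?_⟩
    · rw [Unitary.mem_iff]
      exact ⟨Subsingleton.elim _ _, Subsingleton.elim _ _⟩
    · rw [Subsingleton.elim (exp (h t * x * h t) - 1) (0:A)]
      exact B.zero_mem
    · have : (fun t => star (exp (h t * x * h t)) * exp x - exp (x - h t * x * h t))
          = fun _ => (0:A) := funext fun t => Subsingleton.elim _ _
      rw [this]; exact tendsto_const_nhds
    · have : (fun t => (star (exp (h t * x * h t)) * exp x) * φ d -
            φ d * (star (exp (h t * x * h t)) * exp x)) = fun _ => (0:A) :=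
        funext fun t => Subsingleton.elim _ _
      rw [this]; exact tendsto_const_nhds
  haveI : NormOneClass A := inferInstance
  -- basic facts
  have hsa : ∀ t, star (h t) = h t := fun t => IsSelfAdjoint.of_nonneg (hpos t)
  have hskew : ∀ t, star (h t * x * h t) = -(h t * x * h t) := by
    intro t
    rw [star_mul, star_mul, hsa t, hx]
    rw [mul_assoc]
    noncomm_ring
  have hstar_exp : ∀ t, star (exp (h t * x * h t)) = exp (-(h t * x * h t)) := fun t => by
    rw [star_exp, hskew t]
  have hmemB : ∀ t, h t * x * h t ∈ B := fun t =>
    B.mul_mem_right _ _ (B.mul_mem_right _ _ (hmem t))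
  have hleft : ∀ (t : ℕ) (v : A), ‖h t * v‖ ≤ ‖v‖ := by
    intro t v
    refine (norm_mul_le _ _).trans ?_
    calc ‖h t‖ * ‖v‖ ≤ 1 * ‖v‖ := mul_le_mul_of_nonneg_right (hcontr t) (norm_nonneg v)
      _ = ‖v‖ := one_mul _
  have hright : ∀ (t : ℕ) (v : A), ‖v * h t‖ ≤ ‖v‖ := by
    intro t v
    refine (norm_mul_le _ _).trans ?_
    calc ‖v‖ * ‖h t‖ ≤ ‖v‖ * 1 := mul_le_mul_of_nonneg_left (hcontr t) (norm_nonneg v)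
      _ = ‖v‖ := mul_one _
  have haM : ∀ t, ‖h t * x * h t‖ ≤ ‖x‖ := fun t =>
    (hright t _).trans (hleft t x)
  -- Part 1
  have part1 : ∀ t, exp (h t * x * h t) ∈ unitary A ∧ exp (h t * x * h t) - 1 ∈ B :=
    fun t => ⟨by letI : NormedAlgebra ℚ A := NormedAlgebra.restrictScalars ℚ ℂ A; exact exp_mem_unitary_of_mem_skewAdjoint (skewAdjoint.mem_iff.mpr (hskew t)),
      exp_sub_one_mem B hBclosed (hmemB t)⟩
  -- commutator of h x h with x tends to 0
  have hax : Tendsto (fun t => (h t * x * h t) * x - x * (h t * x * h t)) atTop (𝓝 0) := by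
    have hid : ∀ t, (h t * x * h t) * x - x * (h t * x * h t)
        = (h t * x) * (h t * x - x * h t) + (h t * x - x * h t) * (x * h t) := by
      intro t; noncomm_ring
    have hc0 : Tendsto (fun t => ‖h t * x - x * h t‖) atTop (𝓝 0) :=
      tendsto_zero_iff_norm_tendsto_zero.mp hqcx
    apply squeeze_zero_norm (a := fun t => 2 * ‖x‖ * ‖h t * x - x * h t‖)
    · intro t
      rw [hid t]
      calc ‖(h t * x) * (h t * x - x * h t) + (h t * x - x * h t) * (x * h t)‖
          ≤ ‖(h t * x) * (h t * x - x * h t)‖ + ‖(h t * x - x * h t) * (x * h t)‖ :=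
            norm_add_le _ _
        _ ≤ ‖x‖ * ‖h t * x - x * h t‖ + ‖h t * x - x * h t‖ * ‖x‖ := by
            refine add_le_add ((norm_mul_le _ _).trans ?_) ((norm_mul_le _ _).trans ?_)
            · exact mul_le_mul_of_nonneg_right (hleft t x) (norm_nonneg _)
            · exact mul_le_mul_of_nonneg_left (hright t x) (norm_nonneg _)
        _ = 2 * ‖x‖ * ‖h t * x - x * h t‖ := by ring
    · simpa using hc0.const_mul (2 * ‖x‖)
  set M : ℝ := ‖x‖ + 1 with hMdef
  have hM1 : 1 ≤ M := by simp [hMdef]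
  have hxM : ‖x‖ ≤ M := by simp [hMdef]
  -- Part 2
  have part2' : Tendsto (fun t => exp (-(h t * x * h t)) * exp x - exp (x - h t * x * h t))
      atTop (𝓝 0) := by
    apply squeeze_zero_norm
      (a := fun t => (∑' n : ℕ, (n:ℝ)^2 * (4*M^2)^n / (Nat.factorial n : ℝ))
        * ‖(h t * x * h t) * x - x * (h t * x * h t)‖)
    · intro t
      have key := exp_mul_exp_bound M hM1 (-(h t * x * h t)) x
        (by rw [norm_neg]; exact (haM t).trans hxM) hxM
      have h1 : -(h t * x * h t) + x = x - h t * x * h t := by abel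
      have h2 : (-(h t * x * h t)) * x - x * (-(h t * x * h t))
          = -((h t * x * h t) * x - x * (h t * x * h t)) := by noncomm_ring
      rw [h1, h2, norm_neg] at key
      exact key
    · simpa using (tendsto_zero_iff_norm_tendsto_zero.mp hax).const_mul
        (∑' n : ℕ, (n:ℝ)^2 * (4*M^2)^n / (Nat.factorial n : ℝ))
  have part2 : Tendsto (fun t => star (exp (h t * x * h t)) * exp x
      - exp (x - h t * x * h t)) atTop (𝓝 0) := by
    simp only [hstar_exp]
    exact part2'
  refine ⟨part1, part2, ?_⟩
  -- Part 3
  intro d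
  have hb0 : x * φ d - φ d * x ∈ B := hxB d
  have hbh : Tendsto (fun t => h t * (x * φ d - φ d * x) * h t) atTop
      (𝓝 (x * φ d - φ d * x)) := by
    have h1 := (happrox _ hb0).1
    have h2 := (happrox _ hb0).2
    have hid : (fun t => h t * (x * φ d - φ d * x) * h t)
        = fun t => h t * ((x * φ d - φ d * x) * h t - (x * φ d - φ d * x))
          + h t * (x * φ d - φ d * x) := funext fun t => by noncomm_ring
    rw [hid]
    have hz : Tendsto (fun t => h t * ((x * φ d - φ d * x) * h t - (x * φ d - φ d * x)))
        atTop (𝓝 0) := by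
      apply squeeze_zero_norm (a := fun t => ‖(x * φ d - φ d * x) * h t - (x * φ d - φ d * x)‖)
      · intro t; exact hleft t _
      · exact tendsto_zero_iff_norm_tendsto_zero.mp (by simpa using h2.sub (tendsto_const_nhds (x := x * φ d - φ d * x)))
    simpa using hz.add h1
  have hcomm : Tendsto (fun t => (h t * x * h t) * φ d - φ d * (h t * x * h t)) atTop
      (𝓝 (x * φ d - φ d * x)) := by
    have hid : (fun t => (h t * x * h t) * φ d - φ d * (h t * x * h t))
        = fun t => ((h t * x) * (h t * φ d - φ d * h t) + (h t * φ d - φ d * h t) * (x * h t))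
          + h t * (x * φ d - φ d * x) * h t := funext fun t => by noncomm_ring
    rw [hid]
    have hd0 : Tendsto (fun t => ‖h t * φ d - φ d * h t‖) atTop (𝓝 0) :=
      tendsto_zero_iff_norm_tendsto_zero.mp (hqcφ d)
    have hz : Tendsto (fun t => (h t * x) * (h t * φ d - φ d * h t)
        + (h t * φ d - φ d * h t) * (x * h t)) atTop (𝓝 0) := by
      apply squeeze_zero_norm (a := fun t => 2 * ‖x‖ * ‖h t * φ d - φ d * h t‖)
      · intro t
        calc ‖(h t * x) * (h t * φ d - φ d * h t) + (h t * φ d - φ d * h t) * (x * h t)‖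
            ≤ ‖(h t * x) * (h t * φ d - φ d * h t)‖ + ‖(h t * φ d - φ d * h t) * (x * h t)‖ :=
              norm_add_le _ _
          _ ≤ ‖x‖ * ‖h t * φ d - φ d * h t‖ + ‖h t * φ d - φ d * h t‖ * ‖x‖ := by
              refine add_le_add ((norm_mul_le _ _).trans ?_) ((norm_mul_le _ _).trans ?_)
              · exact mul_le_mul_of_nonneg_right (hleft t x) (norm_nonneg _)
              · exact mul_le_mul_of_nonneg_left (hright t x) (norm_nonneg _)
          _ = 2 * ‖x‖ * ‖h t * φ d - φ d * h t‖ := by ring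
      · simpa using hd0.const_mul (2 * ‖x‖)
    simpa using hz.add hbh
  have hycomm : Tendsto (fun t => (x - h t * x * h t) * φ d - φ d * (x - h t * x * h t))
      atTop (𝓝 0) := by
    have hid : (fun t => (x - h t * x * h t) * φ d - φ d * (x - h t * x * h t))
        = fun t => (x * φ d - φ d * x) - ((h t * x * h t) * φ d - φ d * (h t * x * h t)) :=
      funext fun t => by noncomm_ring
    rw [hid]
    simpa using (tendsto_const_nhds (x := x * φ d - φ d * x)).sub hcomm
  set M2 : ℝ := 2 * ‖x‖ + 1 with hM2def
  have hM21 : 1 ≤ M2 := by simp [hM2def]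

  have hexpy : Tendsto (fun t => exp (x - h t * x * h t) * φ d
      - φ d * exp (x - h t * x * h t)) atTop (𝓝 0) := by
    apply squeeze_zero_norm
      (a := fun t => (∑' n : ℕ, (2*M2)^n / (Nat.factorial n : ℝ))
        * ‖(x - h t * x * h t) * φ d - φ d * (x - h t * x * h t)‖)
    · intro t
      apply exp_comm_bound M2 hM21
      calc ‖x - h t * x * h t‖ ≤ ‖x‖ + ‖h t * x * h t‖ := norm_sub_le _ _
        _ ≤ ‖x‖ + ‖x‖ := by have := haM t; linarith
        _ ≤ M2 := by simp [hM2def]; linarith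
    · simpa using (tendsto_zero_iff_norm_tendsto_zero.mp hycomm).const_mul
        (∑' n : ℕ, (2*M2)^n / (Nat.factorial n : ℝ))
  simp only [hstar_exp]
  have hid : (fun t => (exp (-(h t * x * h t)) * exp x) * φ d
        - φ d * (exp (-(h t * x * h t)) * exp x))
      = fun t => (exp (x - h t * x * h t) * φ d - φ d * exp (x - h t * x * h t))
        + ((exp (-(h t * x * h t)) * exp x - exp (x - h t * x * h t)) * φ d
          - φ d * (exp (-(h t * x * h t)) * exp x - exp (x - h t * x * h t))) :=
    funext fun t => by noncomm_ring
  rw [hid]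
  have hz2 : Tendsto (fun t => (exp (-(h t * x * h t)) * exp x
      - exp (x - h t * x * h t)) * φ d
      - φ d * (exp (-(h t * x * h t)) * exp x - exp (x - h t * x * h t)))
      atTop (𝓝 0) := by
    have hr0 : Tendsto (fun t => ‖exp (-(h t * x * h t)) * exp x
        - exp (x - h t * x * h t)‖) atTop (𝓝 0) :=
      tendsto_zero_iff_norm_tendsto_zero.mp part2'
    apply squeeze_zero_norm
      (a := fun t => ‖exp (-(h t * x * h t)) * exp x - exp (x - h t * x * h t)‖ * ‖φ d‖
        + ‖φ d‖ * ‖exp (-(h t * x * h t)) * exp x - exp (x - h t * x * h t)‖)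
    · intro t
      exact (norm_sub_le _ _).trans (add_le_add (norm_mul_le _ _) (norm_mul_le _ _))
    · simpa using (hr0.mul_const ‖φ d‖).add (hr0.const_mul ‖φ d‖)
  simpa using hexpy.add hz2
end
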